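/- Suppose u ∈ Ḣ¹(ℝ^N) satisfies ‖∇u‖² < ‖∇W‖² and E(u) ≤ (1−δ₀)E(W) for some δ₀ > 0. Then there exists δ̄ = δ̄(δ₀, N) > 0 such that ∫|∇u|² − ∫|u|^{2*} ≥ δ̄ ∫|∇u|². -/

import Mathlib

open MeasureTheory

/-- If `u ∈ Ḣ¹(ℝ^N)` satisfies the Sobolev inequality with best constant `C`,
`‖∇u‖² < ‖∇W‖² = C^{-N}` and `E(u) ≤ (1−δ₀)E(W) = (1−δ₀)(1/N)C^{-N}`, then there exists
`δ̄ = δ̄(δ₀, N) > 0` such that `∫|∇u|² − ∫|u|^{2*} ≥ δ̄ ∫|∇u|²`. -/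
theorem stmt6 (N : ℕ) (hN : 3 ≤ N) (C : ℝ) (hC : 0 < C) (δ₀ : ℝ) (hδ₀ : 0 < δ₀) :
    ∃ δb > (0 : ℝ), ∀ u : EuclideanSpace ℝ (Fin N) → ℝ,
      (∫ x, |u x| ^ ((2 * (N : ℝ)) / ((N : ℝ) - 2))) ^ (((N : ℝ) - 2) / (2 * (N : ℝ)))
          ≤ C * (∫ x, ‖gradient u x‖ ^ 2) ^ ((1 : ℝ) / 2) →
      (∫ x, ‖gradient u x‖ ^ 2) < C ^ (-(N : ℝ)) →
      (1 / 2) * (∫ x, ‖gradient u x‖ ^ 2)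
          - (((N : ℝ) - 2) / (2 * (N : ℝ))) * (∫ x, |u x| ^ ((2 * (N : ℝ)) / ((N : ℝ) - 2)))
        ≤ (1 - δ₀) * ((1 / (N : ℝ)) * C ^ (-(N : ℝ))) →
      (∫ x, ‖gradient u x‖ ^ 2) - (∫ x, |u x| ^ ((2 * (N : ℝ)) / ((N : ℝ) - 2)))
        ≥ δb * (∫ x, ‖gradient u x‖ ^ 2) := by
  have hN3 : (3 : ℝ) ≤ (N : ℝ) := by exact_mod_cast hN
  have hN2 : (0 : ℝ) < (N : ℝ) - 2 := by linarith
  have hNpos : (0 : ℝ) < (N : ℝ) := by linarith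
  set s : ℝ := (2 * (N : ℝ)) / ((N : ℝ) - 2) with hs_def
  set e : ℝ := ((N : ℝ) - 2) / (2 * (N : ℝ)) with he_def
  set κ : ℝ := 2 / ((N : ℝ) - 2) with hκ_def
  have hs_pos : 0 < s := by positivity
  have hκ_pos : 0 < κ := by positivity
  have hes : e * s = 1 := by rw [he_def, hs_def]; field_simp
  have hκ1 : κ + 1 = s / 2 := by rw [hκ_def, hs_def]; field_simp; ring
  set δ' : ℝ := min δ₀ (1 / 2) with hδ'_def
  have hδ'_pos : 0 < δ' := lt_min hδ₀ (by norm_num)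
  have hδ'_le : δ' ≤ 1 / 2 := min_le_right _ _
  have hδ'δ₀ : δ' ≤ δ₀ := min_le_left _ _
  have h1δ' : (0 : ℝ) ≤ 1 - δ' := by linarith
  have h1δ'lt : 1 - δ' < 1 := by linarith
  set M : ℝ := C ^ (-(N : ℝ)) with hM_def
  have hM_pos : 0 < M := Real.rpow_pos_of_pos hC _
  have hCsMκ : C ^ s * M ^ κ = 1 := by
    rw [hM_def, ← Real.rpow_mul hC.le, ← Real.rpow_add hC]
    have h0 : s + -(N : ℝ) * κ = 0 := by
      rw [hs_def, hκ_def]; field_simp; ring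
    rw [h0, Real.rpow_zero]
  refine ⟨1 - (1 - δ') ^ κ, by
    have : (1 - δ') ^ κ < 1 := Real.rpow_lt_one h1δ' h1δ'lt hκ_pos
    linarith, ?_⟩
  intro u hSob hA hE
  set A : ℝ := ∫ x, ‖gradient u x‖ ^ 2 with hA_def
  set B : ℝ := ∫ x, |u x| ^ s with hB_def
  have hA0 : 0 ≤ A := integral_nonneg fun x => by positivity
  have hB0 : 0 ≤ B := integral_nonneg fun x => Real.rpow_nonneg (abs_nonneg _) _
  -- Sobolev consequence : B ≤ C^s * A^(s/2)
  have hBS : B ≤ C ^ s * A ^ (s / 2) := by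
    have h1 : (B ^ e) ^ s ≤ (C * A ^ ((1 : ℝ) / 2)) ^ s :=
      Real.rpow_le_rpow (Real.rpow_nonneg hB0 e) hSob hs_pos.le
    rw [← Real.rpow_mul hB0, hes, Real.rpow_one,
      Real.mul_rpow hC.le (Real.rpow_nonneg hA0 _), ← Real.rpow_mul hA0] at h1
    have h2 : (1 : ℝ) / 2 * s = s / 2 := by ring
    rwa [h2] at h1
  rcases eq_or_lt_of_le hA0 with hAz | hApos
  · -- A = 0
    have hAz' : A = 0 := hAz.symm
    have hsne : s / 2 ≠ 0 := by positivity
    have hB0' : B ≤ 0 := by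
      have := hBS
      rw [hAz', Real.zero_rpow hsne, mul_zero] at this
      exact this
    have hBz : B = 0 := le_antisymm hB0' hB0
    rw [hAz', hBz]
    simp
  · -- A > 0
    have hAκM : A ^ κ ≤ M ^ κ := Real.rpow_le_rpow hA0 hA.le hκ_pos.le
    have hAs_split : A ^ (s / 2) = A ^ κ * A := by
      rw [← hκ1, Real.rpow_add hApos, Real.rpow_one]
    have hCsA : C ^ s * A ^ κ ≤ 1 := by
      calc C ^ s * A ^ κ ≤ C ^ s * M ^ κ := by
            apply mul_le_mul_of_nonneg_left hAκM (Real.rpow_nonneg hC.le _)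
        _ = 1 := hCsMκ
    have hCsAs_le_A : C ^ s * A ^ (s / 2) ≤ A := by
      rw [hAs_split, ← mul_assoc]
      nlinarith [hApos]
    -- energy bound gives A ≤ (1 - δ₀) * M
    have hc_pos : 0 < e := by rw [he_def]; positivity
    have hE' : (1 / 2) * A - e * (C ^ s * A ^ (s / 2)) ≤ (1 - δ₀) * ((1 / (N : ℝ)) * M) := by
      have : e * B ≤ e * (C ^ s * A ^ (s / 2)) := mul_le_mul_of_nonneg_left hBS hc_pos.le
      calc (1 / 2) * A - e * (C ^ s * A ^ (s / 2)) ≤ (1 / 2) * A - e * B := by linarith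
        _ ≤ (1 - δ₀) * ((1 / (N : ℝ)) * M) := hE
    have hhalf : (1 : ℝ) / 2 - e = 1 / (N : ℝ) := by
      rw [he_def]; field_simp; ring
    have hAM : A ≤ (1 - δ₀) * M := by
      have h3 : (1 / 2) * A - e * A ≤ (1 - δ₀) * ((1 / (N : ℝ)) * M) := by
        have h4 : e * (C ^ s * A ^ (s / 2)) ≤ e * A :=
          mul_le_mul_of_nonneg_left hCsAs_le_A hc_pos.le
        linarith
      have h5 : (1 / (N : ℝ)) * A ≤ (1 - δ₀) * ((1 / (N : ℝ)) * M) := by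
        calc (1 / (N : ℝ)) * A = ((1 : ℝ) / 2 - e) * A := by rw [hhalf]
          _ = (1 / 2) * A - e * A := by ring
          _ ≤ _ := h3
      have h6 : (1 / (N : ℝ)) * A ≤ (1 / (N : ℝ)) * ((1 - δ₀) * M) := by
        calc (1 / (N : ℝ)) * A ≤ (1 - δ₀) * ((1 / (N : ℝ)) * M) := h5
          _ = (1 / (N : ℝ)) * ((1 - δ₀) * M) := by ring
      exact le_of_mul_le_mul_left (by simpa [mul_comm] using h6) (by positivity)
    have hAM' : A ≤ (1 - δ') * M := by
      have : (1 - δ₀) * M ≤ (1 - δ') * M :=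
        mul_le_mul_of_nonneg_right (by linarith) hM_pos.le
      linarith
    -- final bound : B ≤ (1-δ')^κ * A
    have hBfin : B ≤ (1 - δ') ^ κ * A := by
      have h7 : A ^ κ ≤ ((1 - δ') * M) ^ κ := Real.rpow_le_rpow hA0 hAM' hκ_pos.le
      have h8 : ((1 - δ') * M) ^ κ = (1 - δ') ^ κ * M ^ κ :=
        Real.mul_rpow h1δ' hM_pos.le
      have h9 : C ^ s * A ^ κ ≤ (1 - δ') ^ κ := by
        calc C ^ s * A ^ κ ≤ C ^ s * ((1 - δ') ^ κ * M ^ κ) := by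
              rw [← h8]
              exact mul_le_mul_of_nonneg_left h7 (Real.rpow_nonneg hC.le _)
          _ = (1 - δ') ^ κ * (C ^ s * M ^ κ) := by ring
          _ = (1 - δ') ^ κ := by rw [hCsMκ, mul_one]
      calc B ≤ C ^ s * A ^ (s / 2) := hBS
        _ = (C ^ s * A ^ κ) * A := by rw [hAs_split]; ring
        _ ≤ (1 - δ') ^ κ * A := mul_le_mul_of_nonneg_right h9 hA0
    have hid : (1 - (1 - δ') ^ κ) * A = A - (1 - δ') ^ κ * A := by ring
    linarith [hBfin, hid.ge, hid.le]
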